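/- arXiv:1301.6752 — 3 statements merged into one kernel-verified Lean document; each statement's English description precedes it below -/
import Mathlib

section
/- Let A ∈ ℂ^{m×n} and B ∈ ℂ^{m×m}. Then: (a) there exists a Hermitian X ∈ ℂ^{n×n} such that AXA* ⪰ BB* if and only if ℛ(B) ⊆ ℛ(A); (b) there exists a Hermitian X ∈ ℂ^{n×n} such that AXA* ≻ BB* if and only if r(A) = m. -/
open Matrix ComplexOrder

/-- The matrix of the orthogonal projection of `ℂ^m` onto the subspace `U`. -/
noncomputable def projMat {m : ℕ} (U : Submodule ℂ (EuclideanSpace ℂ (Fin m))) :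
    Matrix (Fin m) (Fin m) ℂ :=
  Matrix.toEuclideanLin.symm (U.subtype ∘ₗ (U.orthogonalProjection).toLinearMap)

/-- `E_A`: orthogonal projection onto the orthogonal complement of the column space of `A`. -/
noncomputable def eProj {m p : ℕ} (A : Matrix (Fin m) (Fin p) ℂ) : Matrix (Fin m) (Fin m) ℂ :=
  projMat (LinearMap.range (Matrix.toEuclideanLin A))ᗮ

/-- `F_B`: orthogonal projection onto the kernel of `B`. -/
noncomputable def fProj {q m : ℕ} (B : Matrix (Fin q) (Fin m) ℂ) : Matrix (Fin m) (Fin m) ℂ :=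
  projMat (LinearMap.ker (Matrix.toEuclideanLin B))

/-- `i₊`: the number of positive eigenvalues of a Hermitian matrix, with multiplicity. -/
noncomputable def iPos {ι : Type} [Fintype ι] [DecidableEq ι] (A : Matrix ι ι ℂ) : ℕ :=
  if h : A.IsHermitian then Nat.card {i : ι // 0 < h.eigenvalues i} else 0

/-- `i₋`: the number of negative eigenvalues of a Hermitian matrix, with multiplicity. -/
noncomputable def iNeg {ι : Type} [Fintype ι] [DecidableEq ι] (A : Matrix ι ι ℂ) : ℕ :=
  if h : A.IsHermitian then Nat.card {i : ι // h.eigenvalues i < 0} else 0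

/-- Factor a linear map through another whose kernel is smaller. -/
lemma factor_through {V W W' : Type*} [AddCommGroup V] [Module ℂ V] [AddCommGroup W]
    [Module ℂ W] [AddCommGroup W'] [Module ℂ W'] (f : V →ₗ[ℂ] W) (g : V →ₗ[ℂ] W')
    (h : LinearMap.ker f ≤ LinearMap.ker g) : ∃ k : W →ₗ[ℂ] W', ∀ v, k (f v) = g v := by
  obtain ⟨k, hk⟩ := LinearMap.exists_extend
    (((LinearMap.ker f).liftQ g h) ∘ₗ f.quotKerEquivRange.symm.toLinearMap)
  refine ⟨k, fun v => ?_⟩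
  have h1 : k (f v) = (k ∘ₗ (LinearMap.range f).subtype) ⟨f v, LinearMap.mem_range_self f v⟩ := rfl
  rw [h1, hk]
  simp [LinearMap.quotKerEquivRange_symm_apply_image]

/-- Range inclusion gives a matrix factorization. -/
lemma exists_eq_mul_of_range_le {m n p : ℕ} {A : Matrix (Fin m) (Fin n) ℂ}
    {B : Matrix (Fin m) (Fin p) ℂ}
    (h : LinearMap.range B.mulVecLin ≤ LinearMap.range A.mulVecLin) :
    ∃ C : Matrix (Fin n) (Fin p) ℂ, A * C = B := by
  have hc : ∀ j, ∃ c : Fin n → ℂ, A *ᵥ c = Bᵀ j := by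
    intro j
    have : Bᵀ j ∈ LinearMap.range B.mulVecLin :=
      ⟨Pi.single j 1, by rw [Matrix.mulVecLin_apply, Matrix.mulVec_single_one]; rfl⟩
    obtain ⟨c, hc⟩ := h this
    exact ⟨c, hc⟩
  choose c hcc using hc
  refine ⟨Matrix.of fun i j => c j i, ?_⟩
  ext i j
  have := congrFun (hcc j) i
  simpa [Matrix.mul_apply, Matrix.mulVec, dotProduct] using this

lemma exists_eq_mul_of_ker_le {m n : ℕ} {A : Matrix (Fin m) (Fin n) ℂ}
    {B : Matrix (Fin m) (Fin m) ℂ}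
    (h : LinearMap.ker Aᴴ.mulVecLin ≤ LinearMap.ker Bᴴ.mulVecLin) :
    ∃ C : Matrix (Fin n) (Fin m) ℂ, A * C = B := by
  obtain ⟨k, hk⟩ := factor_through Aᴴ.mulVecLin Bᴴ.mulVecLin h
  set K := LinearMap.toMatrix' k with hKdef
  have hKA : Bᴴ = K * Aᴴ := by
    have h2 : ∀ v, Bᴴ *ᵥ v = (K * Aᴴ) *ᵥ v := by
      intro v
      have hv := hk v
      rw [Matrix.mulVecLin_apply, Matrix.mulVecLin_apply] at hv
      have hK : K *ᵥ (Aᴴ *ᵥ v) = k (Aᴴ *ᵥ v) := by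
        rw [hKdef, ← Matrix.toLin'_apply, Matrix.toLin'_toMatrix']
      rw [← hv, ← Matrix.mulVec_mulVec, hK]
    ext i j
    have := congrFun (h2 (Pi.single j 1)) i
    simpa [Matrix.mulVec_single] using this
  refine ⟨Kᴴ, ?_⟩
  calc A * Kᴴ = (K * Aᴴ)ᴴ := by
        rw [Matrix.conjTranspose_mul, Matrix.conjTranspose_conjTranspose]
    _ = (Bᴴ)ᴴ := by rw [hKA]
    _ = B := Matrix.conjTranspose_conjTranspose B

lemma sandwich {m n p : ℕ} (A : Matrix (Fin m) (Fin n) ℂ) (C : Matrix (Fin n) (Fin p) ℂ) :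
    A * (C * Cᴴ) * Aᴴ = (A * C) * (A * C)ᴴ := by
  simp only [Matrix.conjTranspose_mul, Matrix.mul_assoc]

theorem stmt8 {m n : ℕ} (A : Matrix (Fin m) (Fin n) ℂ) (B : Matrix (Fin m) (Fin m) ℂ) :
    ((∃ X : Matrix (Fin n) (Fin n) ℂ, X.IsHermitian ∧ (A * X * Aᴴ - B * Bᴴ).PosSemidef) ↔
        LinearMap.range B.mulVecLin ≤ LinearMap.range A.mulVecLin) ∧
      ((∃ X : Matrix (Fin n) (Fin n) ℂ, X.IsHermitian ∧ (A * X * Aᴴ - B * Bᴴ).PosDef) ↔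
        A.rank = m) := by
  constructor
  · constructor
    · rintro ⟨X, hX, hpsd⟩
      have hker : LinearMap.ker Aᴴ.mulVecLin ≤ LinearMap.ker Bᴴ.mulVecLin := by
        intro v hv
        rw [LinearMap.mem_ker, Matrix.mulVecLin_apply] at hv ⊢
        have h0 : (A * X * Aᴴ) *ᵥ v = 0 := by
          rw [← Matrix.mulVec_mulVec, hv, Matrix.mulVec_zero]
        have h1 := hpsd.dotProduct_mulVec_nonneg v
        rw [Matrix.sub_mulVec, dotProduct_sub, h0, dotProduct_zero,
          zero_sub] at h1
        have h1' : star v ⬝ᵥ (B * Bᴴ) *ᵥ v ≤ 0 := neg_nonneg.mp h1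
        have h2 : star v ⬝ᵥ (B * Bᴴ) *ᵥ v = star (Bᴴ *ᵥ v) ⬝ᵥ (Bᴴ *ᵥ v) := by
          rw [← Matrix.mulVec_mulVec, Matrix.dotProduct_mulVec, Matrix.star_mulVec,
            Matrix.conjTranspose_conjTranspose]
        have h4 : star (Bᴴ *ᵥ v) ⬝ᵥ (Bᴴ *ᵥ v) = 0 :=
          le_antisymm (h2 ▸ h1') (dotProduct_star_self_nonneg _)
        exact dotProduct_star_self_eq_zero.mp h4
      obtain ⟨C, hC⟩ := exists_eq_mul_of_ker_le hker
      rintro y ⟨x, rfl⟩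
      exact ⟨C *ᵥ x, by
        rw [Matrix.mulVecLin_apply, Matrix.mulVecLin_apply, Matrix.mulVec_mulVec, hC]⟩
    · intro h
      obtain ⟨C, hC⟩ := exists_eq_mul_of_range_le h
      refine ⟨C * Cᴴ, Matrix.isHermitian_mul_conjTranspose_self C, ?_⟩
      rw [sandwich, hC, sub_self]
      exact Matrix.PosSemidef.zero
  · constructor
    · rintro ⟨X, hX, hpd⟩
      have hM : (A * X * Aᴴ).PosDef := by
        have := hpd.add_posSemidef (Matrix.posSemidef_self_mul_conjTranspose B)
        rwa [sub_add_cancel] at this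
      have h1 : (A * X * Aᴴ).rank = m := by
        rw [Matrix.rank_of_isUnit _ hM.isUnit, Fintype.card_fin]
      have h2 : (A * X * Aᴴ).rank ≤ A.rank :=
        le_trans (Matrix.rank_mul_le_left _ _) (Matrix.rank_mul_le_left _ _)
      have h3 : A.rank ≤ m := by simpa using Matrix.rank_le_card_height A
      omega
    · intro h
      have htop : LinearMap.range A.mulVecLin = ⊤ := by
        apply Submodule.eq_top_of_finrank_eq
        rw [Module.finrank_fin_fun]
        exact h
      obtain ⟨C, hC⟩ := exists_eq_mul_of_range_le (B := B) (le_top.trans_eq htop.symm)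
      obtain ⟨D, hD⟩ := exists_eq_mul_of_range_le (B := (1 : Matrix (Fin m) (Fin m) ℂ))
        (le_top.trans_eq htop.symm)
      refine ⟨C * Cᴴ + D * Dᴴ, (Matrix.isHermitian_mul_conjTranspose_self C).add
        (Matrix.isHermitian_mul_conjTranspose_self D), ?_⟩
      have key : A * (C * Cᴴ + D * Dᴴ) * Aᴴ = B * Bᴴ + 1 := by
        rw [Matrix.mul_add, Matrix.add_mul, sandwich, sandwich, hC, hD,
          Matrix.conjTranspose_one, Matrix.mul_one]
      rw [key, add_sub_cancel_left]
      exact Matrix.PosDef.one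
end

section
/- Let A ∈ ℂ^{m×n} and B ∈ ℂ^{m×m}. Then: (a) there exists X ∈ ℂ^{n×n} such that AX ≠ 0 and AXX*A* ⪯ BB* if and only if ℛ(A) ∩ ℛ(B) ≠ {0}; (b) there exists X ∈ ℂ^{n×n} such that AX ≠ 0 and AXX*A* ≺ BB* if and only if A ≠ 0 and r(B) = m. -/
open Matrix ComplexOrder

namespace Stmt11Aux

lemma mul_vecMulVec {l m n : ℕ} (B : Matrix (Fin l) (Fin m) ℂ) (v : Fin m → ℂ) (w : Fin n → ℂ) :
    B * vecMulVec v w = vecMulVec (B *ᵥ v) w := by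
  ext i j
  simp only [mul_apply, vecMulVec_apply, mulVec, dotProduct, Finset.sum_mul]
  exact Finset.sum_congr rfl fun k _ => by ring

lemma vecMulVec_mul {l m n : ℕ} (v : Fin l → ℂ) (w : Fin m → ℂ) (B : Matrix (Fin m) (Fin n) ℂ) :
    vecMulVec v w * B = vecMulVec v (w ᵥ* B) := by
  ext i j
  simp only [mul_apply, vecMulVec_apply, vecMul, dotProduct, Finset.mul_sum]
  exact Finset.sum_congr rfl fun k _ => by ring

lemma conjTranspose_vecMulVec {m n : ℕ} (v : Fin m → ℂ) (w : Fin n → ℂ) :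
    (vecMulVec v w)ᴴ = vecMulVec (star w) (star v) := by
  ext i j
  simp [vecMulVec_apply, conjTranspose_apply, mul_comm]

lemma vecMulVec_mul_vecMulVec {l m n : ℕ} (a : Fin l → ℂ) (b c : Fin m → ℂ) (d : Fin n → ℂ) :
    vecMulVec a b * vecMulVec c d = (b ⬝ᵥ c) • vecMulVec a d := by
  ext i j
  simp only [mul_apply, vecMulVec_apply, Matrix.smul_apply, dotProduct, Finset.sum_mul, smul_eq_mul]
  exact Finset.sum_congr rfl fun k _ => by ring

lemma vecMulVec_mulVec {m n : ℕ} (v : Fin m → ℂ) (w : Fin n → ℂ) (x : Fin n → ℂ) :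
    vecMulVec v w *ᵥ x = (w ⬝ᵥ x) • v := by
  ext i
  simp only [mulVec, vecMulVec_apply, dotProduct, Pi.smul_apply, smul_eq_mul, Finset.sum_mul]
  exact Finset.sum_congr rfl fun k _ => by ring

lemma smul_posSemidef {m : ℕ} {M : Matrix (Fin m) (Fin m) ℂ} (hM : M.PosSemidef) {t : ℝ}
    (ht : 0 ≤ t) : ((t : ℂ) • M).PosSemidef := by
  refine posSemidef_iff_dotProduct_mulVec.mpr ⟨?_, fun x => ?_⟩
  · unfold Matrix.IsHermitian
    rw [conjTranspose_smul, hM.1.eq]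
    simp
  · rw [smul_mulVec, dotProduct_smul, smul_eq_mul]
    exact mul_nonneg (by exact_mod_cast Complex.zero_le_real.mpr ht) (hM.dotProduct_mulVec_nonneg x)

lemma smul_posDef {m : ℕ} {M : Matrix (Fin m) (Fin m) ℂ} (hM : M.PosDef) {t : ℝ}
    (ht : 0 < t) : ((t : ℂ) • M).PosDef := by
  refine posDef_iff_dotProduct_mulVec.mpr ⟨?_, fun x hx => ?_⟩
  · unfold Matrix.IsHermitian
    rw [conjTranspose_smul, hM.1.eq]
    simp
  · rw [smul_mulVec, dotProduct_smul, smul_eq_mul]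
    exact mul_pos (by exact_mod_cast Complex.zero_lt_real.mpr ht) (hM.dotProduct_mulVec_pos hx)

lemma unit_psd {m : ℕ} (w : Fin m → ℂ) (hw : star w ⬝ᵥ w = 1) :
    ((1 : Matrix (Fin m) (Fin m) ℂ) - vecMulVec w (star w)).PosSemidef := by
  have hH : (vecMulVec w (star w))ᴴ = vecMulVec w (star w) := by
    rw [conjTranspose_vecMulVec, star_star]
  have key : (1 : Matrix (Fin m) (Fin m) ℂ) - vecMulVec w (star w)
      = ((1 : Matrix (Fin m) (Fin m) ℂ) - vecMulVec w (star w))ᴴ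
        * ((1 : Matrix (Fin m) (Fin m) ℂ) - vecMulVec w (star w)) := by
    rw [conjTranspose_sub, conjTranspose_one, hH, sub_mul, mul_sub, mul_sub, one_mul, mul_one,
      vecMulVec_mul_vecMulVec, hw, one_smul]
    simp only [one_mul, mul_one]
    abel
  rw [key]
  exact posSemidef_conjTranspose_mul_self _

lemma exists_smul_one_sub_posDef {m : ℕ} (v : Fin m → ℂ) :
    ∃ s : ℝ, 0 < s ∧ ((1 : Matrix (Fin m) (Fin m) ℂ) - (s:ℂ) • vecMulVec v (star v)).PosDef := by
  by_cases hv : v = 0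
  · refine ⟨1, one_pos, ?_⟩
    have h0 : vecMulVec v (star v) = (0 : Matrix (Fin m) (Fin m) ℂ) := by
      ext i j; simp [hv, vecMulVec_apply]
    simpa [h0] using Matrix.PosDef.one (n := Fin m) (R := ℂ)
  · have hpos : (0:ℂ) < star v ⬝ᵥ v := Matrix.dotProduct_star_self_pos_iff.mpr hv
    set c : ℂ := star v ⬝ᵥ v with hc
    have hcr : 0 < c.re := by
      have := Complex.lt_def.mp hpos
      simpa using this.1
    have him : c.im = 0 := by
      have := Complex.lt_def.mp hpos
      simpa using this.2.symm
    set cr : ℝ := c.re with hcrdef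
    have hceq : c = (cr : ℂ) := by
      apply Complex.ext <;> simp [him, hcrdef]
    set a : ℝ := (Real.sqrt cr)⁻¹ with hadef
    have hsroot : 0 < Real.sqrt cr := Real.sqrt_pos.mpr hcr
    have haa : a * a = cr⁻¹ := by
      rw [hadef, ← mul_inv, Real.mul_self_sqrt hcr.le]
    set w : Fin m → ℂ := (a : ℂ) • v with hwdef
    have hw : star w ⬝ᵥ w = 1 := by
      rw [hwdef, star_smul, smul_dotProduct, dotProduct_smul, ← hc, hceq]
      simp only [smul_eq_mul, Complex.star_def, Complex.conj_ofReal]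
      norm_cast
      rw [← mul_assoc, haa]
      field_simp
    have hww : vecMulVec w (star w) = ((a*a : ℝ) : ℂ) • vecMulVec v (star v) := by
      ext i j
      simp only [hwdef, vecMulVec_apply, Pi.smul_apply, Pi.star_apply, smul_eq_mul, star_mul',
        Complex.star_def, Complex.conj_ofReal, Matrix.smul_apply, Complex.ofReal_mul]
      ring
    set s : ℝ := (cr + 1)⁻¹ with hsdef
    have hs0 : 0 < s := by positivity
    refine ⟨s, hs0, ?_⟩
    set t : ℝ := s * cr with htdef
    have ht0 : 0 ≤ t := by positivity
    have ht1 : t < 1 := by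
      rw [htdef, hsdef, inv_mul_eq_div, div_lt_one (by linarith)]
      linarith
    have hscal : ((t:ℝ):ℂ) * ((a*a:ℝ):ℂ) = (s:ℂ) := by
      rw [← Complex.ofReal_mul]
      congr 1
      rw [haa, htdef]
      field_simp
    have hdecomp : (1 : Matrix (Fin m) (Fin m) ℂ) - (s:ℂ) • vecMulVec v (star v)
        = ((t:ℝ):ℂ) • ((1 : Matrix (Fin m) (Fin m) ℂ) - vecMulVec w (star w))
          + (((1-t):ℝ):ℂ) • (1 : Matrix (Fin m) (Fin m) ℂ) := by
      rw [hww, smul_sub, smul_smul, hscal]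
      push_cast
      module
    rw [hdecomp]
    exact Matrix.PosDef.posSemidef_add (smul_posSemidef (unit_psd w hw) ht0)
      (smul_posDef Matrix.PosDef.one (by linarith))

lemma mem_range_of_psd_sub {k : ℕ} {N : Matrix (Fin k) (Fin k) ℂ} {y : Fin k → ℂ}
    (h : (N - vecMulVec y (star y)).PosSemidef) : y ∈ LinearMap.range N.mulVecLin := by
  classical
  set T := Matrix.toEuclideanLin N with hT
  set U := LinearMap.range T with hU
  set y' : EuclideanSpace ℂ (Fin k) := (WithLp.equiv 2 (Fin k → ℂ)).symm y with hy'
  set x : EuclideanSpace ℂ (Fin k) :=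
    y' - (U.orthogonalProjection y' : EuclideanSpace ℂ (Fin k)) with hx
  have hxU : x ∈ Uᗮ := U.sub_starProjection_mem_orthogonal y'
  set xf : Fin k → ℂ := WithLp.equiv 2 (Fin k → ℂ) x with hxf
  have h0 : star xf ⬝ᵥ (N *ᵥ xf) = 0 := by
    have hTx : T x ∈ U := ⟨x, rfl⟩
    have h1 : (inner ℂ x (T x) : ℂ) = 0 := (Submodule.mem_orthogonal' U x).mp hxU (T x) hTx
    rw [EuclideanSpace.inner_eq_star_dotProduct, Matrix.ofLp_toEuclideanLin_apply, dotProduct_comm] at h1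
    exact h1
  have hq := h.dotProduct_mulVec_nonneg xf
  set cst : ℂ := star y ⬝ᵥ xf with hcst
  have hexp : star xf ⬝ᵥ ((N - vecMulVec y (star y)) *ᵥ xf) = - (cst * star cst) := by
    rw [sub_mulVec, dotProduct_sub, h0, vecMulVec_mulVec, dotProduct_smul, smul_eq_mul]
    rw [zero_sub, hcst]
    have hsc : star xf ⬝ᵥ y = star (star y ⬝ᵥ xf) := star_dotProduct xf y
    rw [hsc, mul_comm]
  rw [hexp] at hq
  have hcz : cst = 0 := by
    have h2 : cst * star cst ≤ 0 := neg_nonneg.mp hq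
    have h3 : (0:ℂ) ≤ cst * star cst := mul_star_self_nonneg cst
    have h4 : cst * star cst = 0 := le_antisymm h2 h3
    rw [Complex.star_def, Complex.mul_conj] at h4
    norm_cast at h4
    exact Complex.normSq_eq_zero.mp h4
  have hyx : (inner ℂ y' x : ℂ) = 0 := by
    rw [EuclideanSpace.inner_eq_star_dotProduct, dotProduct_comm]
    simpa [hy', hcst, hxf] using hcz
  have hpx : (inner ℂ ((U.orthogonalProjection y' : EuclideanSpace ℂ (Fin k))) x : ℂ) = 0 :=
    hxU _ (U.orthogonalProjection y').2
  have hxx : (inner ℂ x x : ℂ) = 0 := by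
    rw [hx, inner_sub_left, hyx, hpx, sub_zero]
  have hx0 : x = 0 := inner_self_eq_zero.mp hxx
  have hyU : y' ∈ U := by
    have heq : y' = (U.orthogonalProjection y' : EuclideanSpace ℂ (Fin k)) :=
      sub_eq_zero.mp (hx ▸ hx0)
    rw [heq]
    exact (U.orthogonalProjection y').2
  obtain ⟨z, hz⟩ := hyU
  refine ⟨WithLp.equiv 2 (Fin k → ℂ) z, ?_⟩
  have hNz : N *ᵥ (WithLp.equiv 2 (Fin k → ℂ) z) = WithLp.equiv 2 (Fin k → ℂ) (T z) :=
    (Matrix.ofLp_toEuclideanLin_apply N z).symm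
  rw [Matrix.mulVecLin_apply, hNz, hz]
  simp [hy']

lemma posDef_mul_mul_conjTranspose {k : ℕ} {M B : Matrix (Fin k) (Fin k) ℂ} (hM : M.PosDef)
    (hB : IsUnit B) : (B * M * Bᴴ).PosDef := by
  refine posDef_iff_dotProduct_mulVec.mpr ⟨?_, fun x hx => ?_⟩
  · have h : B * M * Bᴴ = (Bᴴ)ᴴ * M * Bᴴ := by rw [conjTranspose_conjTranspose]
    rw [h]
    exact Matrix.isHermitian_conjTranspose_mul_mul _ hM.1
  · have hinj : Function.Injective (Bᴴ).mulVec :=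
      Matrix.mulVec_injective_iff_isUnit.mpr ((Matrix.isUnit_conjTranspose _).mpr hB)
    have hz : Bᴴ *ᵥ x ≠ 0 := fun hc => hx (hinj (by simpa using hc))
    have := hM.dotProduct_mulVec_pos hz
    simpa only [star_mulVec, dotProduct_mulVec, vecMul_vecMul, conjTranspose_conjTranspose]
      using this

lemma construct {m n : ℕ} (A : Matrix (Fin m) (Fin n) ℂ) (B : Matrix (Fin m) (Fin m) ℂ)
    {u : Fin n → ℂ} {v : Fin m → ℂ} (huv : A *ᵥ u = B *ᵥ v) (hy0 : A *ᵥ u ≠ 0) {s : ℝ}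
    (hs : 0 < s) :
    ∃ X : Matrix (Fin n) (Fin n) ℂ, A * X ≠ 0 ∧
      B * Bᴴ - A * X * Xᴴ * Aᴴ
        = B * ((1 : Matrix (Fin m) (Fin m) ℂ) - (s:ℂ) • vecMulVec v (star v)) * Bᴴ := by
  have hn : 0 < n := by
    rcases Nat.eq_zero_or_pos n with h0 | h
    · exfalso
      apply hy0
      subst h0
      ext i
      simp [mulVec, dotProduct]
    · exact h
  set j : Fin n := ⟨0, hn⟩
  set d : Fin n → ℂ := ((Real.sqrt s : ℝ) : ℂ) • (Pi.single j 1 : Fin n → ℂ) with hd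
  set X := vecMulVec u d with hX
  have hAX : A * X = vecMulVec (A *ᵥ u) d := mul_vecMulVec A u d
  have hsr : Real.sqrt s ≠ 0 := by positivity
  have hdd : d ⬝ᵥ star d = (s:ℂ) := by
    simp only [hd, dotProduct, Pi.smul_apply, Pi.star_apply, smul_eq_mul, star_mul',
      Complex.star_def, Complex.conj_ofReal]
    rw [Finset.sum_eq_single j (fun k _ hk => by simp [Pi.single_eq_of_ne hk]) (by simp)]
    simp only [Pi.single_eq_same, _root_.map_one, mul_one, star_one, one_mul]
    norm_cast
    exact Real.mul_self_sqrt hs.le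
  refine ⟨X, ?_, ?_⟩
  · intro hc
    rw [hX, mul_vecMulVec A u d] at hc
    obtain ⟨i, hi⟩ := Function.ne_iff.mp hy0
    have h1 := congrFun (congrFun hc i) j
    simp only [vecMulVec_apply, hd, Pi.smul_apply, Pi.single_eq_same, smul_eq_mul, mul_one,
      Matrix.zero_apply] at h1
    rcases mul_eq_zero.mp h1 with h2 | h2
    · exact hi h2
    · exact hsr (by exact_mod_cast h2)
  · have h1 : A * X * Xᴴ * Aᴴ = (s:ℂ) • vecMulVec (A *ᵥ u) (star (A *ᵥ u)) := by
      have e1 : A * X * Xᴴ * Aᴴ = (A * X) * (A * X)ᴴ := by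
        rw [conjTranspose_mul, Matrix.mul_assoc]
      rw [e1, hAX, conjTranspose_vecMulVec, vecMulVec_mul_vecMulVec, hdd]
    have h2 : B * ((s:ℂ) • vecMulVec v (star v)) * Bᴴ
        = (s:ℂ) • vecMulVec (B *ᵥ v) (star (B *ᵥ v)) := by
      rw [Matrix.mul_smul, Matrix.smul_mul, mul_vecMulVec, vecMulVec_mul, ← star_mulVec]
    rw [h1, huv, Matrix.mul_sub, Matrix.sub_mul, mul_one, h2]

end Stmt11Aux

open Stmt11Aux in
theorem stmt11 {m n : ℕ} (A : Matrix (Fin m) (Fin n) ℂ) (B : Matrix (Fin m) (Fin m) ℂ) :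
    ((∃ X : Matrix (Fin n) (Fin n) ℂ,
        A * X ≠ 0 ∧ (B * Bᴴ - A * X * Xᴴ * Aᴴ).PosSemidef) ↔
          LinearMap.range A.mulVecLin ⊓ LinearMap.range B.mulVecLin ≠ ⊥) ∧
      ((∃ X : Matrix (Fin n) (Fin n) ℂ,
        A * X ≠ 0 ∧ (B * Bᴴ - A * X * Xᴴ * Aᴴ).PosDef) ↔
          A ≠ 0 ∧ B.rank = m) := by
  constructor
  · constructor
    · rintro ⟨X, hAX, hpsd⟩
      have hex : ∃ i j, (A * X) i j ≠ 0 := by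
        by_contra hcon
        push_neg at hcon
        exact hAX (Matrix.ext fun i j => hcon i j)
      obtain ⟨i, j, hij⟩ := hex
      set e : Fin n → ℂ := Pi.single j 1 with he
      set y : Fin m → ℂ := (A * X) *ᵥ e with hy
      have hy0 : y ≠ 0 := by
        intro hc
        apply hij
        have := congrFun hc i
        simpa [hy, he] using this
      have hymemA : y ∈ LinearMap.range A.mulVecLin :=
        ⟨X *ᵥ e, by rw [Matrix.mulVecLin_apply, Matrix.mulVec_mulVec]⟩
      have hee : star e ⬝ᵥ e = 1 := by
        simp only [he, dotProduct, Pi.star_apply, Pi.single_apply]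
        rw [Finset.sum_eq_single j] <;> simp
      have hid : (A * X) * vecMulVec e (star e) * (A * X)ᴴ = vecMulVec y (star y) := by
        rw [mul_vecMulVec, vecMulVec_mul, ← star_mulVec]
      have hdiff : A * X * Xᴴ * Aᴴ - vecMulVec y (star y)
          = (A * X) * ((1 : Matrix (Fin n) (Fin n) ℂ) - vecMulVec e (star e)) * (A * X)ᴴ := by
        have e1 : A * X * Xᴴ * Aᴴ = (A * X) * (A * X)ᴴ := by
          rw [conjTranspose_mul, Matrix.mul_assoc]
        rw [Matrix.mul_sub, Matrix.sub_mul, Matrix.mul_one, hid, e1]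
      have hpsd2 : (B * Bᴴ - vecMulVec y (star y)).PosSemidef := by
        have h1 := (unit_psd e hee).mul_mul_conjTranspose_same (A * X)
        rw [← hdiff] at h1
        have h2 := hpsd.add h1
        have h3 : B * Bᴴ - A * X * Xᴴ * Aᴴ + (A * X * Xᴴ * Aᴴ - vecMulVec y (star y))
            = B * Bᴴ - vecMulVec y (star y) := by abel
        rwa [h3] at h2
      have hymemB : y ∈ LinearMap.range B.mulVecLin := by
        obtain ⟨z, hz⟩ := mem_range_of_psd_sub hpsd2
        rw [Matrix.mulVecLin_apply, ← Matrix.mulVec_mulVec] at hz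
        exact ⟨Bᴴ *ᵥ z, hz⟩
      rw [Submodule.ne_bot_iff]
      exact ⟨y, Submodule.mem_inf.mpr ⟨hymemA, hymemB⟩, hy0⟩
    · intro hne
      obtain ⟨y, hymem, hy0⟩ := (Submodule.ne_bot_iff _).mp hne
      obtain ⟨hyA, hyB⟩ := Submodule.mem_inf.mp hymem
      obtain ⟨u, hu⟩ := hyA
      obtain ⟨v, hv⟩ := hyB
      rw [Matrix.mulVecLin_apply] at hu hv
      obtain ⟨s, hs, hpd⟩ := exists_smul_one_sub_posDef v
      obtain ⟨X, hX1, hX2⟩ := construct A B (hu.trans hv.symm) (hu.symm ▸ hy0) hs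
      exact ⟨X, hX1, hX2 ▸ (hpd.posSemidef).mul_mul_conjTranspose_same B⟩
  · constructor
    · rintro ⟨X, hAX, hpd⟩
      refine ⟨fun hc => hAX (by rw [hc, Matrix.zero_mul]), ?_⟩
      have hpsd : (A * X * Xᴴ * Aᴴ).PosSemidef := by
        have e1 : A * X * Xᴴ * Aᴴ = (A * X) * (A * X)ᴴ := by
          rw [conjTranspose_mul, Matrix.mul_assoc]
        rw [e1]
        exact posSemidef_self_mul_conjTranspose _
      have hBB : (B * Bᴴ).PosDef := by
        have h1 := hpd.add_posSemidef hpsd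
        have h2 : B * Bᴴ - A * X * Xᴴ * Aᴴ + A * X * Xᴴ * Aᴴ = B * Bᴴ := by abel
        rwa [h2] at h1
      have h3 : (B * Bᴴ).rank = m := by
        rw [Matrix.rank_of_isUnit _ hBB.isUnit]
        simp
      rw [← Matrix.rank_self_mul_conjTranspose]
      exact h3
    · rintro ⟨hA0, hrank⟩
      have hex : ∃ i j, A i j ≠ 0 := by
        by_contra hcon
        push_neg at hcon
        exact hA0 (Matrix.ext fun i j => hcon i j)
      obtain ⟨i, j, hij⟩ := hex
      set u : Fin n → ℂ := Pi.single j 1 with hudef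
      have hAu : A *ᵥ u ≠ 0 := by
        intro hc
        apply hij
        have := congrFun hc i
        simpa [hudef] using this
      have htop : LinearMap.range B.mulVecLin = ⊤ := by
        apply Submodule.eq_top_of_finrank_eq
        rw [Module.finrank_fintype_fun_eq_card, Fintype.card_fin]
        exact hrank
      have hBsurj : Function.Surjective B.mulVec := fun w => by
        have hw : w ∈ LinearMap.range B.mulVecLin := htop ▸ Submodule.mem_top
        obtain ⟨z, hz⟩ := hw
        exact ⟨z, hz⟩
      have hBunit : IsUnit B := Matrix.mulVec_surjective_iff_isUnit.mp hBsurj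
      obtain ⟨v, hv⟩ := hBsurj (A *ᵥ u)
      obtain ⟨s, hs, hpd⟩ := exists_smul_one_sub_posDef v
      obtain ⟨X, hX1, hX2⟩ := construct A B hv.symm hAu hs
      exact ⟨X, hX1, hX2 ▸ posDef_mul_mul_conjTranspose hpd hBunit⟩
end

section
/- Let A ∈ ℂ^{m×m} be Hermitian, let P ∈ ℂ^{m×n}, and let Q denote the m×m matrix of the orthogonal projection of ℂ^m (with the standard inner product) onto the column space of P. Then i₊(I_m − QAQ) = m − r(P) + i₊(P*(I_m − A)P) and i₋(I_m − QAQ) = i₋(P*(I_m − A)P). In particular, if I_m − A ⪰ 0 then I_m − QAQ ⪰ 0, and if I_m − A ≻ 0 then I_m − QAQ ≻ 0. -/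
open Matrix ComplexOrder

open Module Submodule



namespace Stmt19Aux

local notation "⟪" x ", " y "⟫" => @inner ℂ _ _ x y

noncomputable abbrev ee {k : ℕ} : EuclideanSpace ℂ (Fin k) ≃ₗ[ℂ] (Fin k → ℂ) :=
  WithLp.linearEquiv 2 ℂ (Fin k → ℂ)

/-- quadratic form of a matrix on Euclidean space -/
noncomputable def qf {k : ℕ} (H : Matrix (Fin k) (Fin k) ℂ) (x : EuclideanSpace ℂ (Fin k)) : ℂ :=
  dotProduct (star (ee x)) (H *ᵥ (ee x))

lemma qf_eq_inner {k : ℕ} (H : Matrix (Fin k) (Fin k) ℂ) (x : EuclideanSpace ℂ (Fin k)) :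
    qf H x = ⟪x, Matrix.toEuclideanLin H x⟫ := by
  rw [EuclideanSpace.inner_eq_star_dotProduct, dotProduct_comm]
  rfl

section spectral
variable {k : ℕ} {H : Matrix (Fin k) (Fin k) ℂ} (hH : H.IsHermitian)

lemma toEuclideanLin_eigenvectorBasis (i : Fin k) :
    Matrix.toEuclideanLin H (hH.eigenvectorBasis i) = hH.eigenvalues i • hH.eigenvectorBasis i := by
  apply (WithLp.equiv 2 (Fin k → ℂ)).injective
  simp only [WithLp.equiv_apply, Matrix.ofLp_toEuclideanLin_apply]
  have := hH.mulVec_eigenvectorBasis i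
  funext a
  exact congrFun this a

lemma qf_eq_sum (x : EuclideanSpace ℂ (Fin k)) :
    qf H x = ∑ i, (hH.eigenvalues i : ℂ) *
      (star ⟪hH.eigenvectorBasis i, x⟫ * ⟪hH.eigenvectorBasis i, x⟫) := by
  rw [qf_eq_inner]
  have hHx : Matrix.toEuclideanLin H x
      = ∑ i, (⟪hH.eigenvectorBasis i, x⟫ * (hH.eigenvalues i : ℂ)) • hH.eigenvectorBasis i := by
    conv_lhs => rw [← hH.eigenvectorBasis.sum_repr' x]
    rw [map_sum]
    refine Finset.sum_congr rfl fun i _ => ?_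
    rw [LinearMap.map_smul, toEuclideanLin_eigenvectorBasis hH i,
      ← algebraMap_smul ℂ (hH.eigenvalues i) (hH.eigenvectorBasis i), smul_smul,
      Complex.coe_algebraMap]
  rw [hHx, inner_sum]
  refine Finset.sum_congr rfl fun i _ => ?_
  rw [inner_smul_right, ← inner_conj_symm x (hH.eigenvectorBasis i)]
  rw [Complex.star_def]
  ring

variable (p : Fin k → Prop) [DecidablePred p]

noncomputable def spanSel : Submodule ℂ (EuclideanSpace ℂ (Fin k)) :=
  Submodule.span ℂ (hH.eigenvectorBasis '' {i | p i})

lemma finrank_spanSel : finrank ℂ (spanSel hH p) = Fintype.card {i // p i} := by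
  rw [spanSel, Set.image_eq_range]
  exact finrank_span_eq_card
    ((hH.eigenvectorBasis.orthonormal.linearIndependent).comp _ Subtype.val_injective)

lemma inner_spanSel_eq_zero {x} (hx : x ∈ spanSel hH p) {j} (hj : ¬ p j) :
    ⟪hH.eigenvectorBasis j, x⟫ = 0 := by
  induction hx using Submodule.span_induction with
  | mem y hy =>
    obtain ⟨i, hi, rfl⟩ := hy
    exact hH.eigenvectorBasis.orthonormal.2 (fun h => hj (h ▸ hi))
  | zero => exact inner_zero_right _
  | add a b _ _ ha hb => rw [inner_add_right, ha, hb, add_zero]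
  | smul c a _ ha => rw [inner_smul_right, ha, mul_zero]

lemma exists_inner_ne_zero {x : EuclideanSpace ℂ (Fin k)} (hx : x ∈ spanSel hH p) (hx0 : x ≠ 0) :
    ∃ i, p i ∧ ⟪hH.eigenvectorBasis i, x⟫ ≠ 0 := by
  by_contra h
  push_neg at h
  apply hx0
  rw [← hH.eigenvectorBasis.sum_repr' x]
  refine Finset.sum_eq_zero fun i _ => ?_
  by_cases hi : p i
  · rw [h i hi, zero_smul]
  · rw [inner_spanSel_eq_zero hH p hx hi, zero_smul]

lemma star_mul_self_pos {c : ℂ} (hc : c ≠ 0) : 0 < star c * c := by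
  rw [Complex.star_def, ← Complex.normSq_eq_conj_mul_self]
  exact_mod_cast Complex.normSq_pos.mpr hc

lemma qf_pos_of_mem_spanSel (hp : ∀ i, p i → 0 < hH.eigenvalues i) {x}
    (hx : x ∈ spanSel hH p) (hx0 : x ≠ 0) : 0 < qf H x := by
  rw [qf_eq_sum hH]
  obtain ⟨i0, hp0, hc0⟩ := exists_inner_ne_zero hH p hx hx0
  refine Finset.sum_pos' (fun i _ => ?_) ⟨i0, Finset.mem_univ _, ?_⟩
  · by_cases hi : p i
    · exact mul_nonneg (le_of_lt (Complex.zero_lt_real.mpr (hp i hi)))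
        (star_mul_self_nonneg _)
    · rw [inner_spanSel_eq_zero hH p hx hi, mul_zero, mul_zero]
  · exact mul_pos (Complex.zero_lt_real.mpr (hp i0 hp0)) (star_mul_self_pos hc0)

lemma qf_neg_of_mem_spanSel (hp : ∀ i, p i → hH.eigenvalues i < 0) {x}
    (hx : x ∈ spanSel hH p) (hx0 : x ≠ 0) : qf H x < 0 := by
  rw [qf_eq_sum hH]
  obtain ⟨i0, hp0, hc0⟩ := exists_inner_ne_zero hH p hx hx0
  refine Finset.sum_neg' (fun i _ => ?_) ⟨i0, Finset.mem_univ _, ?_⟩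
  · by_cases hi : p i
    · exact mul_nonpos_of_nonpos_of_nonneg
        (le_of_lt ((show ((hH.eigenvalues i : ℂ)) < 0 by exact_mod_cast Complex.real_lt_real.mpr (hp i hi)))) (star_mul_self_nonneg _)
    · rw [inner_spanSel_eq_zero hH p hx hi, mul_zero, mul_zero]
  · exact mul_neg_of_neg_of_pos ((show ((hH.eigenvalues i0 : ℂ)) < 0 by exact_mod_cast Complex.real_lt_real.mpr (hp i0 hp0))) (star_mul_self_pos hc0)

lemma qf_nonpos_of_mem_spanSel (hp : ∀ i, p i → hH.eigenvalues i ≤ 0) {x}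
    (hx : x ∈ spanSel hH p) : qf H x ≤ 0 := by
  rw [qf_eq_sum hH]
  refine Finset.sum_nonpos fun i _ => ?_
  by_cases hi : p i
  · exact mul_nonpos_of_nonpos_of_nonneg
      (show ((hH.eigenvalues i : ℂ)) ≤ 0 by exact_mod_cast Complex.real_le_real.mpr (hp i hi)) (star_mul_self_nonneg _)
  · rw [inner_spanSel_eq_zero hH p hx hi, mul_zero, mul_zero]

lemma qf_nonneg_of_mem_spanSel (hp : ∀ i, p i → 0 ≤ hH.eigenvalues i) {x}
    (hx : x ∈ spanSel hH p) : 0 ≤ qf H x := by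
  rw [qf_eq_sum hH]
  refine Finset.sum_nonneg fun i _ => ?_
  by_cases hi : p i
  · exact mul_nonneg ((Complex.zero_le_real).mpr (hp i hi)) (star_mul_self_nonneg _)
  · rw [inner_spanSel_eq_zero hH p hx hi, mul_zero, mul_zero]

lemma card_add_card_compl : Fintype.card {i // p i} + Fintype.card {i // ¬ p i} = k := by
  have h1 := Fintype.card_subtype_compl p
  have h2 := Fintype.card_subtype_le p
  simp only [Fintype.card_fin] at h1 h2
  omega

omit [DecidablePred p] in
lemma finrank_add_finrank_le_of_trivial_inter {W V : Submodule ℂ (EuclideanSpace ℂ (Fin k))}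
    (h : ∀ x, x ∈ W → x ∈ V → x = 0) : finrank ℂ W + finrank ℂ V ≤ k := by
  have := Submodule.finrank_add_finrank_le_of_disjoint (s := W) (t := V)
    (Submodule.disjoint_def.mpr h)
  simpa [finrank_euclideanSpace_fin] using this

lemma exists_pos_subspace : ∃ W : Submodule ℂ (EuclideanSpace ℂ (Fin k)),
    finrank ℂ W = Fintype.card {i // 0 < hH.eigenvalues i} ∧
    ∀ x ∈ W, x ≠ 0 → 0 < qf H x :=
  ⟨spanSel hH (fun i => 0 < hH.eigenvalues i), finrank_spanSel hH _,
    fun x hx hx0 => qf_pos_of_mem_spanSel hH _ (fun _ hi => hi) hx hx0⟩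

lemma exists_neg_subspace : ∃ W : Submodule ℂ (EuclideanSpace ℂ (Fin k)),
    finrank ℂ W = Fintype.card {i // hH.eigenvalues i < 0} ∧
    ∀ x ∈ W, x ≠ 0 → qf H x < 0 :=
  ⟨spanSel hH (fun i => hH.eigenvalues i < 0), finrank_spanSel hH _,
    fun x hx hx0 => qf_neg_of_mem_spanSel hH _ (fun _ hi => hi) hx hx0⟩

lemma exists_nonpos_subspace : ∃ V : Submodule ℂ (EuclideanSpace ℂ (Fin k)),
    finrank ℂ V + Fintype.card {i // 0 < hH.eigenvalues i} = k ∧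
    ∀ x ∈ V, qf H x ≤ 0 := by
  refine ⟨spanSel hH (fun i => ¬ 0 < hH.eigenvalues i), ?_, fun x hx =>
    qf_nonpos_of_mem_spanSel hH _ (fun i hi => le_of_not_gt hi) hx⟩
  rw [finrank_spanSel hH _]
  have := card_add_card_compl (k := k) (fun i => 0 < hH.eigenvalues i)
  omega

lemma pos_subspace_bound {W : Submodule ℂ (EuclideanSpace ℂ (Fin k))}
    (hW : ∀ x ∈ W, x ≠ 0 → 0 < qf H x) :
    finrank ℂ W ≤ Fintype.card {i // 0 < hH.eigenvalues i} := by
  have hd : ∀ x, x ∈ W → x ∈ spanSel hH (fun i => ¬ 0 < hH.eigenvalues i) → x = 0 := by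
    intro x h1 h2
    by_contra hx0
    exact absurd (qf_nonpos_of_mem_spanSel hH _ (fun i hi => le_of_not_gt hi) h2)
      (not_le_of_gt (hW x h1 hx0))
  have := finrank_add_finrank_le_of_trivial_inter hd
  rw [finrank_spanSel hH _] at this
  have h2 := card_add_card_compl (k := k) (fun i => 0 < hH.eigenvalues i)
  omega

lemma neg_subspace_bound {W : Submodule ℂ (EuclideanSpace ℂ (Fin k))}
    (hW : ∀ x ∈ W, x ≠ 0 → qf H x < 0) :
    finrank ℂ W ≤ Fintype.card {i // hH.eigenvalues i < 0} := by
  have hd : ∀ x, x ∈ W → x ∈ spanSel hH (fun i => ¬ hH.eigenvalues i < 0) → x = 0 := by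
    intro x h1 h2
    by_contra hx0
    exact absurd (qf_nonneg_of_mem_spanSel hH _ (fun i hi => le_of_not_gt hi) h2)
      (not_le_of_gt (hW x h1 hx0))
  have := finrank_add_finrank_le_of_trivial_inter hd
  rw [finrank_spanSel hH _] at this
  have h2 := card_add_card_compl (k := k) (fun i => hH.eigenvalues i < 0)
  omega

lemma nonpos_subspace_bound {V : Submodule ℂ (EuclideanSpace ℂ (Fin k))}
    (hV : ∀ x ∈ V, qf H x ≤ 0) :
    finrank ℂ V + Fintype.card {i // 0 < hH.eigenvalues i} ≤ k := by
  have hd : ∀ x, x ∈ V → x ∈ spanSel hH (fun i => 0 < hH.eigenvalues i) → x = 0 := by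
    intro x h1 h2
    by_contra hx0
    exact absurd (qf_pos_of_mem_spanSel hH _ (fun _ hi => hi) h2 hx0)
      (not_lt_of_ge (hV x h1))
  have := finrank_add_finrank_le_of_trivial_inter hd
  rw [finrank_spanSel hH _] at this
  omega

end spectral

section maps
variable {V W : Type*} [AddCommGroup V] [Module ℂ V] [AddCommGroup W] [Module ℂ W]

lemma finrank_map_eq_of_injOn (f : V →ₗ[ℂ] W) (p : Submodule ℂ V)
    (h : ∀ x ∈ p, f x = 0 → x = 0) : finrank ℂ (p.map f) = finrank ℂ p := by
  have hinj : Function.Injective (f ∘ₗ p.subtype) := by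
    rw [← LinearMap.ker_eq_bot, LinearMap.ker_eq_bot']
    intro x hx
    exact Subtype.ext (h x x.2 hx)
  have : p.map f = LinearMap.range (f ∘ₗ p.subtype) := by
    rw [LinearMap.range_comp, Submodule.range_subtype]
  rw [this, LinearMap.finrank_range_of_inj hinj]

lemma finrank_le_finrank_map_add_finrank_ker [FiniteDimensional ℂ V]
    (f : V →ₗ[ℂ] W) (p : Submodule ℂ V) :
    finrank ℂ p ≤ finrank ℂ (p.map f) + finrank ℂ (LinearMap.ker f) := by
  have h1 : p.map f = LinearMap.range (f ∘ₗ p.subtype) := by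
    rw [LinearMap.range_comp, Submodule.range_subtype]
  have h2 := (f ∘ₗ p.subtype).finrank_range_add_finrank_ker
  have h3 : finrank ℂ (LinearMap.ker (f ∘ₗ p.subtype)) ≤ finrank ℂ (LinearMap.ker f) := by
    have hle : (LinearMap.ker (f ∘ₗ p.subtype)).map p.subtype ≤ LinearMap.ker f := by
      rintro x ⟨y, hy, rfl⟩
      simpa using hy
    have := finrank_map_eq_of_injOn p.subtype (LinearMap.ker (f ∘ₗ p.subtype))
      (fun x _ hx => Subtype.ext (by simpa using hx))
    rw [← this]
    exact Submodule.finrank_mono hle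
  rw [h1]
  omega

lemma finrank_sup_eq_of_trivial_inter {W₁ W₂ : Submodule ℂ V} [FiniteDimensional ℂ V]
    (h : ∀ x, x ∈ W₁ → x ∈ W₂ → x = 0) :
    finrank ℂ ↥(W₁ ⊔ W₂) = finrank ℂ W₁ + finrank ℂ W₂ := by
  have hd : W₁ ⊓ W₂ = ⊥ := (Submodule.disjoint_def.mpr h).eq_bot
  have := Submodule.finrank_sup_add_finrank_inf_eq W₁ W₂
  rw [hd, finrank_bot] at this
  omega

end maps

section util
variable {k : ℕ}

lemma qf_zero (H : Matrix (Fin k) (Fin k) ℂ) : qf H 0 = 0 := by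
  simp [qf]

lemma inner_self_nonneg' (z : EuclideanSpace ℂ (Fin k)) : 0 ≤ (⟪z, z⟫ : ℂ) := by
  rw [EuclideanSpace.inner_eq_star_dotProduct]
  exact Finset.sum_nonneg fun i _ => mul_star_self_nonneg _

lemma inner_self_pos' {z : EuclideanSpace ℂ (Fin k)} (hz : z ≠ 0) : 0 < (⟪z, z⟫ : ℂ) := by
  rw [EuclideanSpace.inner_eq_star_dotProduct]
  have : ∃ i, WithLp.equiv 2 (Fin k → ℂ) z i ≠ 0 := by
    by_contra h
    push_neg at h
    exact hz ((WithLp.equiv 2 (Fin k → ℂ)).injective (funext h))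
  obtain ⟨i0, hi0⟩ := this
  exact Finset.sum_pos' (fun i _ => mul_star_self_nonneg _)
    ⟨i0, Finset.mem_univ _, by rw [mul_comm]; exact star_mul_self_pos hi0⟩

lemma iPos_eq {H : Matrix (Fin k) (Fin k) ℂ} (hH : H.IsHermitian) :
    iPos H = Fintype.card {i // 0 < hH.eigenvalues i} := by
  rw [iPos, dif_pos hH, Nat.card_eq_fintype_card]

lemma iNeg_eq {H : Matrix (Fin k) (Fin k) ℂ} (hH : H.IsHermitian) :
    iNeg H = Fintype.card {i // hH.eigenvalues i < 0} := by
  rw [iNeg, dif_pos hH, Nat.card_eq_fintype_card]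

lemma toEuclideanLin_mul {l o : ℕ} (M : Matrix (Fin k) (Fin l) ℂ) (N : Matrix (Fin l) (Fin o) ℂ) :
    Matrix.toEuclideanLin (M * N) = (Matrix.toEuclideanLin M) ∘ₗ (Matrix.toEuclideanLin N) := by
  refine LinearMap.ext fun x => ?_
  apply (WithLp.equiv 2 (Fin k → ℂ)).injective
  simp [Matrix.ofLp_toEuclideanLin_apply, LinearMap.comp_apply, Matrix.mulVec_mulVec]

end util
end Stmt19Aux

local notation "⟪" x ", " y "⟫_ℂ" => @inner ℂ _ _ x y

set_option maxHeartbeats 2000000 in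
theorem stmt19 {m n : ℕ} (A : Matrix (Fin m) (Fin m) ℂ) (hA : A.IsHermitian)
    (P : Matrix (Fin m) (Fin n) ℂ)
    (Q : Matrix (Fin m) (Fin m) ℂ)
    (hQ : Q = projMat (LinearMap.range (Matrix.toEuclideanLin P))) :
    iPos (1 - Q * A * Q) = m - P.rank + iPos (Pᴴ * (1 - A) * P) ∧
    iNeg (1 - Q * A * Q) = iNeg (Pᴴ * (1 - A) * P) ∧
    ((1 - A).PosSemidef → (1 - Q * A * Q).PosSemidef) ∧
    ((1 - A).PosDef → (1 - Q * A * Q).PosDef) := by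
  classical
  open Stmt19Aux in
  set U : Submodule ℂ (EuclideanSpace ℂ (Fin m)) := LinearMap.range (Matrix.toEuclideanLin P)
    with hU
  set Plin : EuclideanSpace ℂ (Fin n) →ₗ[ℂ] EuclideanSpace ℂ (Fin m) := Matrix.toEuclideanLin P
    with hPl
  have hQlin : Matrix.toEuclideanLin Q
      = U.subtype ∘ₗ (U.orthogonalProjection).toLinearMap := by
    rw [hQ]
    exact LinearEquiv.apply_symm_apply _ _
  set Qlin : EuclideanSpace ℂ (Fin m) →ₗ[ℂ] EuclideanSpace ℂ (Fin m) := Matrix.toEuclideanLin Q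
    with hQl
  have hQapp : ∀ x, Qlin x = (U.orthogonalProjection x : EuclideanSpace ℂ (Fin m)) := by
    intro x; rw [hQlin]; rfl
  have hQmem : ∀ x, Qlin x ∈ U := by
    intro x; rw [hQapp]; exact (U.orthogonalProjection x).2
  have hQid : ∀ x ∈ U, Qlin x = x := by
    intro x hx; rw [hQapp]; exact Submodule.starProjection_eq_self_iff.mpr hx
  have hQzero : ∀ x ∈ Uᗮ, Qlin x = 0 := by
    intro x hx
    rw [hQapp, Submodule.orthogonalProjectionOnto_apply_of_mem_orthogonal hx]
    rfl
  have hQsym : ∀ x y : EuclideanSpace ℂ (Fin m), ⟪Qlin x, y⟫_ℂ = ⟪x, Qlin y⟫_ℂ := by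
    intro x y
    rw [hQapp, hQapp]
    exact Submodule.inner_starProjection_left_eq_right U x y
  have hQH : Q.IsHermitian := by
    rw [Matrix.isHermitian_iff_isSymmetric]
    exact fun x y => hQsym x y
  have hA1 : (1 - A).IsHermitian := Matrix.IsHermitian.sub Matrix.isHermitian_one hA
  have hL : (1 - Q * A * Q).IsHermitian := by
    refine Matrix.IsHermitian.sub Matrix.isHermitian_one ?_
    rw [Matrix.IsHermitian, Matrix.conjTranspose_mul, Matrix.conjTranspose_mul, hA.eq, hQH.eq,
      Matrix.mul_assoc]
  have hR : (Pᴴ * (1 - A) * P).IsHermitian := by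
    rw [Matrix.IsHermitian, Matrix.conjTranspose_mul, Matrix.conjTranspose_mul, hA1.eq,
      Matrix.conjTranspose_conjTranspose, Matrix.mul_assoc]
  -- quadratic form decompositions
  have hqf1 : ∀ M : Matrix (Fin m) (Fin m) ℂ, ∀ x, Stmt19Aux.qf (1 - M) x
      = ⟪x, x⟫_ℂ - ⟪x, Matrix.toEuclideanLin M x⟫_ℂ := by
    intro M x
    rw [Stmt19Aux.qf_eq_inner, map_sub, LinearMap.sub_apply, inner_sub_right]
    congr 1
    rw [show Matrix.toEuclideanLin (1 : Matrix (Fin m) (Fin m) ℂ) x = x by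
      apply (WithLp.equiv 2 (Fin m → ℂ)).injective
      simp [Matrix.ofLp_toEuclideanLin_apply]]
  have hqf1n : ∀ M : Matrix (Fin n) (Fin n) ℂ, ∀ x, Stmt19Aux.qf (1 - M) x
      = ⟪x, x⟫_ℂ - ⟪x, Matrix.toEuclideanLin M x⟫_ℂ := by
    intro M x
    rw [Stmt19Aux.qf_eq_inner, map_sub, LinearMap.sub_apply, inner_sub_right]
    congr 1
    rw [show Matrix.toEuclideanLin (1 : Matrix (Fin n) (Fin n) ℂ) x = x by
      apply (WithLp.equiv 2 (Fin n → ℂ)).injective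
      simp [Matrix.ofLp_toEuclideanLin_apply]]
  have hqfL : ∀ x, Stmt19Aux.qf (1 - Q * A * Q) x
      = ⟪x - Qlin x, x - Qlin x⟫_ℂ + Stmt19Aux.qf (1 - A) (Qlin x) := by
    intro x
    rw [hqf1, hqf1]
    have hcomp : Matrix.toEuclideanLin (Q * A * Q) x
        = Qlin (Matrix.toEuclideanLin A (Qlin x)) := by
      rw [Stmt19Aux.toEuclideanLin_mul, Stmt19Aux.toEuclideanLin_mul]
      rfl
    rw [hcomp]
    have h1 : ⟪x, Qlin (Matrix.toEuclideanLin A (Qlin x))⟫_ℂ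
        = ⟪Qlin x, Matrix.toEuclideanLin A (Qlin x)⟫_ℂ := by
      rw [← hQsym]
    rw [h1]
    have hpx : ⟪Qlin x, x⟫_ℂ = ⟪x, Qlin x⟫_ℂ := hQsym x x
    have hpp : ⟪Qlin x, Qlin x⟫_ℂ = ⟪x, Qlin x⟫_ℂ := by
      rw [hQsym, hQid _ (hQmem x)]
    rw [inner_sub_left, inner_sub_right, inner_sub_right, hpx, hpp]
    ring
  have hqfR : ∀ y, Stmt19Aux.qf (Pᴴ * (1 - A) * P) y = Stmt19Aux.qf (1 - A) (Plin y) := by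
    intro y
    rw [Stmt19Aux.qf_eq_inner, Stmt19Aux.qf_eq_inner]
    rw [Stmt19Aux.toEuclideanLin_mul, Stmt19Aux.toEuclideanLin_mul]
    rw [LinearMap.comp_apply, LinearMap.comp_apply,
      Matrix.toEuclideanLin_conjTranspose_eq_adjoint, LinearMap.adjoint_inner_right]
  -- rank and dimension facts
  have hrank : P.rank = finrank ℂ U := by
    rw [hU, hPl, Matrix.toEuclideanLin_eq_toLin]
    exact Matrix.rank_eq_finrank_range_toLin P _ _
  have hdimU : finrank ℂ U + finrank ℂ Uᗮ = m := by
    have := Submodule.finrank_add_finrank_orthogonal U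
    rwa [finrank_euclideanSpace_fin] at this
  have hker : finrank ℂ U + finrank ℂ (LinearMap.ker Plin) = n := by
    have := Plin.finrank_range_add_finrank_ker
    rwa [finrank_euclideanSpace_fin] at this
  have hPmem : ∀ y, Plin y ∈ U := fun y => ⟨y, rfl⟩
  -- i₋ : R ≤ L
  have hNegLe : iNeg (Pᴴ * (1 - A) * P) ≤ iNeg (1 - Q * A * Q) := by
    obtain ⟨W, hWdim, hWneg⟩ := Stmt19Aux.exists_neg_subspace hR
    have hmapneg : ∀ x ∈ W.map Plin, x ≠ 0 → Stmt19Aux.qf (1 - Q * A * Q) x < 0 := by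
      rintro x ⟨y, hy, rfl⟩ hx0
      have hy0 : y ≠ 0 := fun h => hx0 (by rw [h, map_zero])
      rw [hqfL, hQid _ (hPmem y), sub_self, inner_zero_left, zero_add, ← hqfR]
      exact hWneg y hy hy0
    have hinj : finrank ℂ (W.map Plin) = finrank ℂ W := by
      refine Stmt19Aux.finrank_map_eq_of_injOn _ _ fun y hy h0 => ?_
      by_contra hy0
      have := hWneg y hy hy0
      rw [hqfR, h0, Stmt19Aux.qf_zero] at this
      exact absurd this (lt_irrefl 0)
    have hb := Stmt19Aux.neg_subspace_bound hL hmapneg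
    rw [Stmt19Aux.iNeg_eq hR, Stmt19Aux.iNeg_eq hL, ← hWdim, ← hinj]
    exact hb
  -- i₋ : L ≤ R
  have hNegGe : iNeg (1 - Q * A * Q) ≤ iNeg (Pᴴ * (1 - A) * P) := by
    set Pres : EuclideanSpace ℂ (Fin n) →ₗ[ℂ] ↥U :=
      LinearMap.codRestrict U Plin hPmem with hPres
    have hPsurj : Function.Surjective Pres := by
      rintro ⟨u, hu⟩
      obtain ⟨y, rfl⟩ := hu
      exact ⟨y, rfl⟩
    obtain ⟨g, hg⟩ := Pres.exists_rightInverse_of_surjective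
      (LinearMap.range_eq_top.mpr hPsurj)
    set ψ : EuclideanSpace ℂ (Fin m) →ₗ[ℂ] EuclideanSpace ℂ (Fin n) :=
      g ∘ₗ (U.orthogonalProjection).toLinearMap with hψ
    have hPψ : ∀ x, Plin (ψ x) = Qlin x := by
      intro x
      have h1 : Pres (g (U.orthogonalProjection x)) = U.orthogonalProjection x := by
        rw [← LinearMap.comp_apply, hg, LinearMap.id_apply]
      have h2 : Plin (ψ x) = ↑(Pres (g (U.orthogonalProjection x))) := by
        rw [hPres]
        simp [hψ, LinearMap.codRestrict_apply]
      rw [h2, h1, hQapp]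
    obtain ⟨W, hWdim, hWneg⟩ := Stmt19Aux.exists_neg_subspace hL
    have hmapneg : ∀ x ∈ W.map ψ, x ≠ 0 → Stmt19Aux.qf (Pᴴ * (1 - A) * P) x < 0 := by
      rintro x ⟨z, hz, rfl⟩ hx0
      have hz0 : z ≠ 0 := fun h => hx0 (by rw [h, map_zero])
      rw [hqfR, hPψ]
      calc Stmt19Aux.qf (1 - A) (Qlin z)
          = Stmt19Aux.qf (1 - Q * A * Q) z - ⟪z - Qlin z, z - Qlin z⟫_ℂ := by
            rw [hqfL]; ring
        _ ≤ Stmt19Aux.qf (1 - Q * A * Q) z - 0 :=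
            sub_le_sub_left (Stmt19Aux.inner_self_nonneg' _) _
        _ < 0 := by rw [sub_zero]; exact hWneg z hz hz0
    have hinjψ : finrank ℂ (W.map ψ) = finrank ℂ W := by
      refine Stmt19Aux.finrank_map_eq_of_injOn _ _ fun z hz h0 => ?_
      by_contra hz0
      have hQz : Qlin z = 0 := by rw [← hPψ, h0, map_zero]
      have := hWneg z hz hz0
      rw [hqfL, hQz, sub_zero, Stmt19Aux.qf_zero, add_zero] at this
      exact absurd this (not_lt_of_ge (Stmt19Aux.inner_self_nonneg' z))
    have hb := Stmt19Aux.neg_subspace_bound hR hmapneg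
    rw [Stmt19Aux.iNeg_eq hR, Stmt19Aux.iNeg_eq hL, ← hWdim, ← hinjψ]
    exact hb
  -- i₊ lower bound
  have hPosGe : Fintype.card {i // 0 < hR.eigenvalues i} + finrank ℂ Uᗮ
      ≤ Fintype.card {i // 0 < hL.eigenvalues i} := by
    obtain ⟨W, hWdim, hWpos⟩ := Stmt19Aux.exists_pos_subspace hR
    have hWU : W.map Plin ≤ U := by rintro x ⟨y, hy, rfl⟩; exact hPmem y
    have htriv : ∀ x, x ∈ W.map Plin → x ∈ Uᗮ → x = 0 := fun x h1 h2 =>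
      Submodule.disjoint_def.mp U.orthogonal_disjoint x (hWU h1) h2
    have hposW' : ∀ x ∈ W.map Plin ⊔ Uᗮ, x ≠ 0 → 0 < Stmt19Aux.qf (1 - Q * A * Q) x := by
      intro x hx hx0
      rw [Submodule.mem_sup] at hx
      obtain ⟨a, ha, b, hb, rfl⟩ := hx
      obtain ⟨y, hy, rfl⟩ := ha
      have hQa : Qlin (Plin y) = Plin y := hQid _ (hPmem y)
      have hQb : Qlin b = 0 := hQzero b hb
      have hQx : Qlin (Plin y + b) = Plin y := by rw [map_add, hQa, hQb, add_zero]
      have hsub : Plin y + b - Qlin (Plin y + b) = b := by rw [hQx]; abel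
      rw [hqfL, hsub, hQx, ← hqfR]
      have hqy : 0 ≤ Stmt19Aux.qf (Pᴴ * (1 - A) * P) y := by
        by_cases hy0 : y = 0
        · rw [hy0, Stmt19Aux.qf_zero]
        · exact le_of_lt (hWpos y hy hy0)
      by_cases hb0 : b = 0
      · have hy0 : y ≠ 0 := by
          intro h
          exact hx0 (by rw [h, map_zero, hb0, add_zero])
        rw [hb0, inner_zero_left, zero_add]
        exact hWpos y hy hy0
      · exact add_pos_of_pos_of_nonneg (Stmt19Aux.inner_self_pos' hb0) hqy
    have hinjP : finrank ℂ (W.map Plin) = finrank ℂ W := by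
      refine Stmt19Aux.finrank_map_eq_of_injOn _ _ fun y hy h0 => ?_
      by_contra hy0
      have := hWpos y hy hy0
      rw [hqfR, h0, Stmt19Aux.qf_zero] at this
      exact absurd this (lt_irrefl 0)
    have hdim' := Stmt19Aux.finrank_sup_eq_of_trivial_inter htriv
    have hb := Stmt19Aux.pos_subspace_bound hL hposW'
    rw [hdim', hinjP, hWdim] at hb
    exact hb
  -- i₊ upper bound
  have hPosLe : finrank ℂ U + Fintype.card {i // 0 < hL.eigenvalues i}
      ≤ m + Fintype.card {i // 0 < hR.eigenvalues i} := by
    obtain ⟨V, hVdim, hVnp⟩ := Stmt19Aux.exists_nonpos_subspace hR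
    have hmapnp : ∀ x ∈ V.map Plin, Stmt19Aux.qf (1 - Q * A * Q) x ≤ 0 := by
      rintro x ⟨y, hy, rfl⟩
      rw [hqfL, hQid _ (hPmem y), sub_self, inner_zero_left, zero_add, ← hqfR]
      exact hVnp y hy
    have h1 := Stmt19Aux.nonpos_subspace_bound hL hmapnp
    have h2 := Stmt19Aux.finrank_le_finrank_map_add_finrank_ker Plin V
    omega
  -- positivity of qf for L from PosSemidef / PosDef of (1-A)
  have hcardLm : Fintype.card {i // 0 < hL.eigenvalues i} ≤ m := by
    have := Fintype.card_subtype_le (fun i : Fin m => 0 < hL.eigenvalues i)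
    rwa [Fintype.card_fin] at this
  refine ⟨?_, le_antisymm hNegGe hNegLe, ?_, ?_⟩
  · rw [Stmt19Aux.iPos_eq hL, Stmt19Aux.iPos_eq hR, hrank]
    omega
  · intro h
    refine .of_dotProduct_mulVec_nonneg hL fun x => ?_
    have key : 0 ≤ Stmt19Aux.qf (1 - Q * A * Q) ((WithLp.equiv 2 (Fin m → ℂ)).symm x) := by
      rw [hqfL]
      exact add_nonneg (Stmt19Aux.inner_self_nonneg' _) (h.dotProduct_mulVec_nonneg _)
    exact key
  · intro h
    refine .of_dotProduct_mulVec_pos hL fun x hx => ?_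
    have hx' : (WithLp.equiv 2 (Fin m → ℂ)).symm x ≠ 0 := by
      intro hc
      exact hx (by simpa using congrArg (WithLp.equiv 2 (Fin m → ℂ)) hc)
    set z : EuclideanSpace ℂ (Fin m) := (WithLp.equiv 2 (Fin m → ℂ)).symm x with hz
    have key : 0 < Stmt19Aux.qf (1 - Q * A * Q) z := by
      rw [hqfL]
      by_cases hQz : Qlin z = 0
      · have hzz : z - Qlin z = z := by rw [hQz, sub_zero]
        rw [hzz, hQz, Stmt19Aux.qf_zero, add_zero]
        exact Stmt19Aux.inner_self_pos' hx'
      · refine add_pos_of_nonneg_of_pos (Stmt19Aux.inner_self_nonneg' _) ?_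
        refine h.dotProduct_mulVec_pos fun hc => hQz ?_
        exact (WithLp.equiv 2 (Fin m → ℂ)).injective (by simpa using hc)
    exact key
end
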